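/- If there exists a non-sofic group, then there exists an ω-non-sofic group, i.e., a non-sofic group admitting a strictly descending chain H_0 > H_1 > H_2 > ⋯ of non-sofic subgroups indexed by the natural numbers. -/

import Mathlib

/-- The normalized Hamming distance between two permutations of `Fin n`:
the number of points where they differ, divided by `n`. -/
noncomputable def permHammingDist {n : ℕ} (σ τ : Equiv.Perm (Fin n)) : ℝ :=
  ((Finset.univ.filter fun i => σ i ≠ τ i).card : ℝ) / n

/-- A group `G` is sofic if for every finite subset `F ⊆ G` and every `ε > 0` there exist
`n ≥ 1` and a map `θ` from `F` to `Sym(Fin n)` (extended to all of `G`) such that: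
(i) `θ` is an `ε`-approximate homomorphism on `F`;
(ii) `θ` almost sends the identity to the identity;
(iii) distinct elements of `F` are sent to permutations at Hamming distance at least `1/4`. -/
def IsSofic (G : Type*) [Group G] : Prop :=
  ∀ (F : Finset G) (ε : ℝ), 0 < ε →
    ∃ n : ℕ, 1 ≤ n ∧ ∃ θ : G → Equiv.Perm (Fin n),
      (∀ g h : G, g ∈ F → h ∈ F → g * h ∈ F →
        permHammingDist (θ g * θ h) (θ (g * h)) < ε) ∧
      ((1 : G) ∈ F → permHammingDist (θ 1) 1 < ε) ∧
      (∀ x y : G, x ∈ F → y ∈ F → x ≠ y → 1 / 4 ≤ permHammingDist (θ x) (θ y))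

/-- A group is minimal non-sofic if it is not sofic but every proper subgroup is sofic. -/
def IsMinimalNonSofic (G : Type*) [Group G] : Prop :=
  ¬ IsSofic G ∧ ∀ H : Subgroup G, H ≠ ⊤ → IsSofic H

/-- A non-sofic group is ω-non-sofic if it admits a strictly descending chain of
non-sofic subgroups indexed by ℕ. -/
def IsOmegaNonSofic (G : Type*) [Group G] : Prop :=
  ¬ IsSofic G ∧ ∃ H : ℕ → Subgroup G, StrictAnti H ∧ ∀ i, ¬ IsSofic (H i)


lemma isSofic_of_injective {G H : Type*} [Group G] [Group H] (φ : G →* H)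
    (hφ : Function.Injective φ) (hH : IsSofic H) : IsSofic G := by
  classical
  intro F ε hε
  obtain ⟨n, hn, θ, hmul, hone, hsep⟩ := hH (F.image φ) ε hε
  refine ⟨n, hn, θ ∘ φ, ?_, ?_, ?_⟩
  · intro g h hg hh hgh
    have := hmul (φ g) (φ h) (Finset.mem_image_of_mem φ hg)
      (Finset.mem_image_of_mem φ hh)
      (by rw [← map_mul]; exact Finset.mem_image_of_mem φ hgh)
    simpa [map_mul] using this
  · intro h1
    have := hone (by simpa using Finset.mem_image_of_mem φ h1)
    simpa [map_one] using this
  · intro x y hx hy hxy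
    exact hsep (φ x) (φ y) (Finset.mem_image_of_mem φ hx)
      (Finset.mem_image_of_mem φ hy) (fun e => hxy (hφ e))

lemma isSofic_of_subsingleton {G : Type*} [Group G] [Subsingleton G] : IsSofic G := by
  intro F ε hε
  refine ⟨1, le_refl 1, fun _ => 1, ?_, ?_, ?_⟩
  · intro g h _ _ _
    simpa [permHammingDist] using hε
  · intro _
    simpa [permHammingDist] using hε
  · intro x y _ _ hxy
    exact absurd (Subsingleton.elim x y) hxy

/-- The subgroup of `ℕ → G` of functions vanishing below `i`. -/
def tailSubgroup (G : Type*) [Group G] (i : ℕ) : Subgroup (ℕ → G) where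
  carrier := {f | ∀ j < i, f j = 1}
  mul_mem' := by
    intro a b ha hb j hj
    simp [Pi.mul_apply, ha j hj, hb j hj]
  one_mem' := fun j _ => rfl
  inv_mem' := by
    intro a ha j hj
    simp [Pi.inv_apply, ha j hj]

lemma mulSingle_mem_tail {G : Type*} [Group G] (i : ℕ) (g : G) :
    (Pi.mulSingle i g : ℕ → G) ∈ tailSubgroup G i := by
  intro j hj
  exact Pi.mulSingle_eq_of_ne (M := fun _ : ℕ => G) (ne_of_lt hj) g

/-- Embedding of `G` into `tailSubgroup G i`. -/
def tailEmbed (G : Type*) [Group G] (i : ℕ) : G →* tailSubgroup G i where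
  toFun g := ⟨Pi.mulSingle i g, mulSingle_mem_tail i g⟩
  map_one' := by
    ext j
    simp
  map_mul' g h := by
    ext j
    simp [Pi.mulSingle_mul]

lemma tailEmbed_injective (G : Type*) [Group G] (i : ℕ) :
    Function.Injective (tailEmbed G i) := by
  intro a b hab
  have h2 : (Pi.mulSingle i a : ℕ → G) = Pi.mulSingle i b := congrArg Subtype.val hab
  exact Pi.mulSingle_injective (M := fun _ : ℕ => G) i h2

/-- If a non-sofic group exists, then an ω-non-sofic group exists. -/
theorem exists_omegaNonSofic_of_exists_nonSofic
    (h : ∃ (G : Type) (_ : Group G), ¬ IsSofic G) :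
    ∃ (H : Type) (_ : Group H), IsOmegaNonSofic H := by
  obtain ⟨G, _, hG⟩ := h
  have hnt : ∃ g : G, g ≠ 1 := by
    by_contra hc
    push_neg at hc
    have : Subsingleton G := ⟨fun a b => by rw [hc a, hc b]⟩
    exact hG isSofic_of_subsingleton
  obtain ⟨g0, hg0⟩ := hnt
  refine ⟨ℕ → G, inferInstance, ?_, tailSubgroup G, ?_, ?_⟩
  · intro hs
    exact hG (isSofic_of_injective ((tailSubgroup G 0).subtype.comp (tailEmbed G 0))
      ((tailSubgroup G 0).subtype_injective.comp (tailEmbed_injective G 0)) hs)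
  · apply strictAnti_nat_of_succ_lt
    intro i
    rw [SetLike.lt_iff_le_and_exists]
    refine ⟨fun f hf j hj => hf j (hj.trans (Nat.lt_succ_self i)), ?_⟩
    refine ⟨Pi.mulSingle i g0, mulSingle_mem_tail i g0, ?_⟩
    intro hmem
    have := hmem i (Nat.lt_succ_self i)
    rw [Pi.mulSingle_eq_same] at this
    exact hg0 this
  · intro i hs
    exact hG (isSofic_of_injective (tailEmbed G i) (tailEmbed_injective G i) hs)
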